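/- Let m ≥ 1 be an integer, let M ≥ 0 be an integer and let c > 0 be real. Then the series Σ_S Tr(S)^M · e^{−c·Tr(S)}, where S ranges over all positive definite half-integral symmetric m×m matrices, converges (the family is summable). -/

import Mathlib

open Real Set Matrix

noncomputable section

lemma summable_exp_neg_abs_int {δ : ℝ} (hδ : 0 < δ) :
    Summable (fun z : ℤ => Real.exp (-δ * |(z : ℝ)|)) := by
  have hnat : Summable (fun n : ℕ => Real.exp ((n : ℝ) * (-δ))) :=
    Real.summable_exp_nat_mul_iff.mpr (neg_neg_of_pos hδ)
  apply Summable.of_nat_of_neg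
  · refine hnat.congr fun n => ?_
    push_cast
    rw [Nat.abs_cast, mul_comm]
  · refine hnat.congr fun n => ?_
    push_cast
    rw [abs_neg, Nat.abs_cast]
    ring_nf

lemma summable_prod_exp_fin {δ : ℝ} (hδ : 0 < δ) (n : ℕ) :
    Summable (fun v : Fin n → ℤ => ∏ i, Real.exp (-δ * |(v i : ℝ)|)) := by
  induction n with
  | zero =>
    exact Summable.of_finite
  | succ k ih =>
    have h := (summable_exp_neg_abs_int hδ).mul_of_nonneg ih
      (fun _ => (Real.exp_pos _).le)
      (fun v => Finset.prod_nonneg fun i _ => (Real.exp_pos _).le)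
    have h2 : Summable ((fun x : ℤ × (Fin k → ℤ) =>
        Real.exp (-δ * |(x.1 : ℝ)|) * ∏ i, Real.exp (-δ * |(x.2 i : ℝ)|)) ∘
        (fun v : Fin (k+1) → ℤ => (v 0, fun i => v i.succ))) := by
      apply h.comp_injective
      intro u v huv
      funext i
      obtain ⟨h1, h2⟩ := Prod.mk.injEq .. ▸ huv
      refine Fin.cases ?_ ?_ i
      · exact h1
      · exact fun j => congrFun h2 j
    refine h2.congr fun v => ?_
    simp [Fin.prod_univ_succ]

lemma summable_prod_exp_idx {δ : ℝ} (hδ : 0 < δ) (m : ℕ) :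
    Summable (fun v : Fin m × Fin m → ℤ => ∏ p, Real.exp (-δ * |(v p : ℝ)|)) := by
  have h := (summable_prod_exp_fin hδ (m * m)).comp_injective
    (i := fun v : Fin m × Fin m → ℤ => fun i : Fin (m*m) => v (finProdFinEquiv.symm i)) ?_
  · refine h.congr fun v => ?_
    exact Equiv.prod_comp finProdFinEquiv.symm (fun p => Real.exp (-δ * |(v p : ℝ)|))
  · intro u v huv
    funext p
    have := congrFun huv (finProdFinEquiv p)
    simpa using this

lemma quad_single {m : ℕ} (S : Matrix (Fin m) (Fin m) ℝ) (i j : Fin m) :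
    Pi.single i (1 : ℝ) ⬝ᵥ (S *ᵥ Pi.single j 1) = S i j := by
  simp [Matrix.mulVec_single, single_dotProduct]

lemma pow_mul_exp_bound {c : ℝ} (hc : 0 < c) (M : ℕ) {x : ℝ} (hx : 0 ≤ x) :
    x ^ M * Real.exp (-c * x) ≤
      ((M.factorial : ℝ) * (2 / c) ^ M) * Real.exp (-(c / 2) * x) := by
  have hy : 0 ≤ c * x / 2 := by positivity
  have h0 : (c * x / 2) ^ M / (M.factorial : ℝ) ≤ Real.exp (c * x / 2) := by
    refine le_trans ?_ (Real.sum_le_exp_of_nonneg hy (M + 1))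
    refine Finset.single_le_sum (f := fun i => (c * x / 2) ^ i / (i.factorial : ℝ))
      (fun i _ => by positivity) (Finset.self_mem_range_succ M)
  have hfac : (0 : ℝ) < (M.factorial : ℝ) := by positivity
  have h1 : (c * x / 2) ^ M ≤ (M.factorial : ℝ) * Real.exp (c * x / 2) := by
    rw [div_le_iff₀ hfac] at h0
    linarith [h0]
  have hxM : x ^ M = (2 / c) ^ M * (c * x / 2) ^ M := by
    rw [← mul_pow]
    congr 1
    field_simp
  calc x ^ M * Real.exp (-c * x)
      = (2 / c) ^ M * ((c * x / 2) ^ M * Real.exp (-c * x)) := by rw [hxM]; ring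
    _ ≤ (2 / c) ^ M * ((M.factorial : ℝ) * Real.exp (c * x / 2) * Real.exp (-c * x)) := by
        refine mul_le_mul_of_nonneg_left ?_ (by positivity)
        exact mul_le_mul_of_nonneg_right h1 (Real.exp_pos _).le
    _ = ((M.factorial : ℝ) * (2 / c) ^ M) * (Real.exp (c * x / 2) * Real.exp (-c * x)) := by
        ring
    _ = ((M.factorial : ℝ) * (2 / c) ^ M) * Real.exp (-(c / 2) * x) := by
        rw [← Real.exp_add]
        congr 1
        ring

lemma diag_pos_of_posDef {m : ℕ} {S : Matrix (Fin m) (Fin m) ℝ} (hS : S.PosDef) (i : Fin m) :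
    0 < S i i := by
  have h := hS.dotProduct_mulVec_pos (x := Pi.single i 1) (by
    intro h0
    have := congrFun h0 i
    simp at this)
  rwa [star_trivial, quad_single] at h

lemma abs_entry_le_of_posDef {m : ℕ} {S : Matrix (Fin m) (Fin m) ℝ} (hS : S.PosDef)
    (hsymm : S.IsSymm) (i j : Fin m) : |S i j| ≤ S.trace := by
  have hdiag := diag_pos_of_posDef hS
  have htr : S.trace = ∑ k, S k k := rfl
  rcases eq_or_ne i j with rfl | hij
  · rw [abs_of_pos (hdiag i), htr]
    exact Finset.single_le_sum (fun k _ => (hdiag k).le) (Finset.mem_univ i)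
  · have hji : S j i = S i j := by
      have := congrFun (congrFun hsymm.eq i) j
      simpa [Matrix.transpose_apply] using this
    have hplus : 0 < S i i + S j j + 2 * S i j := by
      have h := hS.dotProduct_mulVec_pos (x := Pi.single i 1 + Pi.single j 1) (by
        intro h0
        have := congrFun h0 i
        simp [Pi.single_apply, hij, Ne.symm hij] at this)
      rw [star_trivial] at h
      simp only [Matrix.mulVec_add, add_dotProduct, dotProduct_add,
        quad_single] at h
      linarith
    have hminus : 0 < S i i + S j j - 2 * S i j := by
      have h := hS.dotProduct_mulVec_pos (x := Pi.single i 1 - Pi.single j 1) (by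
        intro h0
        have := congrFun h0 i
        simp [Pi.single_apply, hij, Ne.symm hij] at this)
      rw [star_trivial] at h
      simp only [Matrix.mulVec_sub, sub_dotProduct, dotProduct_sub,
        quad_single] at h
      linarith
    have hsum2 : S i i + S j j ≤ S.trace := by
      rw [htr]
      have : S i i + S j j = ∑ k ∈ ({i, j} : Finset (Fin m)), S k k := by
        rw [Finset.sum_pair hij]
      rw [this]
      exact Finset.sum_le_sum_of_subset_of_nonneg (Finset.subset_univ _)
        (fun k _ _ => (hdiag k).le)
    rw [abs_le]
    constructor <;> nlinarith [hdiag i, hdiag j]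
/-- The set of positive definite half-integral symmetric `m × m` real matrices: symmetric,
with integer diagonal entries, off-diagonal entries in `(1/2)ℤ`, and positive definite. -/
def HalfIntegralPosDef (m : ℕ) : Set (Matrix (Fin m) (Fin m) ℝ) :=
  {S | S.IsSymm ∧ (∀ i, ∃ z : ℤ, S i i = (z : ℝ)) ∧
    (∀ i j, ∃ z : ℤ, S i j = (z : ℝ) / 2) ∧ S.PosDef}

/-- For any `m ≥ 1`, `M ≥ 0` and real `c > 0`, the family
`Tr(S)^M e^{-c Tr(S)}`, indexed by the positive definite half-integral symmetric
`m × m` matrices `S`, is summable. -/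
theorem summable_trace_pow_mul_exp_neg_trace (m M : ℕ) (hm : 1 ≤ m) (c : ℝ) (hc : 0 < c) :
    Summable (fun S : HalfIntegralPosDef m => (S : Matrix (Fin m) (Fin m) ℝ).trace ^ M *
      Real.exp (-c * (S : Matrix (Fin m) (Fin m) ℝ).trace)) := by
  have hmm : (0 : ℝ) < (m * m : ℕ) := by
    have : 0 < m := hm
    positivity
  set δ : ℝ := c / (4 * (m * m : ℕ)) with hδdef
  have hδ : 0 < δ := by positivity
  set C : ℝ := (M.factorial : ℝ) * (2 / c) ^ M with hCdef
  have hC : 0 < C := by positivity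
  -- the injection into integer matrices
  set ι : HalfIntegralPosDef m → (Fin m × Fin m → ℤ) :=
    fun S => fun p => (S.2.2.2.1 p.1 p.2).choose with hιdef
  have hspec : ∀ (S : HalfIntegralPosDef m) (p : Fin m × Fin m),
      (S : Matrix (Fin m) (Fin m) ℝ) p.1 p.2 = ((ι S p : ℝ)) / 2 :=
    fun S p => (S.2.2.2.1 p.1 p.2).choose_spec
  have hinj : Function.Injective ι := by
    intro S S' h
    apply Subtype.ext
    apply Matrix.ext
    intro i j
    have h1 := hspec S (i, j)
    have h2 := hspec S' (i, j)
    simp only at h1 h2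
    rw [h1, h2, h]
  -- the dominating function
  have hF : Summable (fun v : Fin m × Fin m → ℤ =>
      C * ∏ p, Real.exp (-δ * |(v p : ℝ)|)) :=
    (summable_prod_exp_idx hδ m).mul_left C
  have hFι := hF.comp_injective hinj
  refine Summable.of_nonneg_of_le ?_ ?_ hFι
  · intro S
    have hT : 0 < (S : Matrix (Fin m) (Fin m) ℝ).trace := by
      rw [Matrix.trace]
      exact Finset.sum_pos (fun i _ => diag_pos_of_posDef S.2.2.2.2 i)
        (Finset.univ_nonempty_iff.mpr (by
          have : 0 < m := hm
          exact ⟨⟨0, this⟩⟩))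
    positivity
  · intro S
    set T : ℝ := (S : Matrix (Fin m) (Fin m) ℝ).trace with hTdef
    have hT : 0 < T := by
      rw [hTdef, Matrix.trace]
      exact Finset.sum_pos (fun i _ => diag_pos_of_posDef S.2.2.2.2 i)
        (Finset.univ_nonempty_iff.mpr ⟨⟨0, hm⟩⟩)
    -- entry bounds
    have hent : ∀ p : Fin m × Fin m, |(ι S p : ℝ)| ≤ 2 * T := by
      intro p
      have h1 : ((ι S p : ℝ)) = 2 * (S : Matrix (Fin m) (Fin m) ℝ) p.1 p.2 := by
        rw [hspec S p]; ring
      rw [h1, abs_mul, abs_two]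
      have := abs_entry_le_of_posDef S.2.2.2.2 S.2.1 p.1 p.2
      linarith
    have hsum : ∑ p : Fin m × Fin m, |(ι S p : ℝ)| ≤ (m * m : ℕ) * (2 * T) := by
      calc ∑ p : Fin m × Fin m, |(ι S p : ℝ)| ≤ ∑ _p : Fin m × Fin m, 2 * T :=
            Finset.sum_le_sum (fun p _ => hent p)
        _ = (m * m : ℕ) * (2 * T) := by
            rw [Finset.sum_const]
            simp [mul_comm]
    have hδsum : -(c / 2) * T ≤ -δ * ∑ p : Fin m × Fin m, |(ι S p : ℝ)| := by
      have h1 : δ * ∑ p : Fin m × Fin m, |(ι S p : ℝ)| ≤ δ * ((m * m : ℕ) * (2 * T)) :=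
        mul_le_mul_of_nonneg_left hsum hδ.le
      have h2 : δ * ((m * m : ℕ) * (2 * T)) = c / 2 * T := by
        rw [hδdef]
        field_simp
        ring
      linarith
    calc T ^ M * Real.exp (-c * T) ≤ C * Real.exp (-(c / 2) * T) :=
          pow_mul_exp_bound hc M hT.le
      _ ≤ C * Real.exp (-δ * ∑ p : Fin m × Fin m, |(ι S p : ℝ)|) :=
          mul_le_mul_of_nonneg_left (Real.exp_le_exp.mpr hδsum) hC.le
      _ = C * ∏ p : Fin m × Fin m, Real.exp (-δ * |(ι S p : ℝ)|) := by
          rw [Finset.mul_sum, Real.exp_sum]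

end
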